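/- Let e1 be a unit vector at which f attains its maximum over the unit sphere of V, with λ1 := f(e1) > 0. If every vector v orthogonal to e1 satisfies K(e1, v) = (λ1/2)·v, then necessarily λ1² = 4ε; in particular ε = 1 and λ1 = 2. Equivalently, Case C_n — in which K(e1,·) has eigenvalue λ1/2 on the whole orthogonal complement of e1 while λ1² − 4ε ≠ 0 — cannot occur. -/
import Mathlib


open scoped RealInnerProductSpace
open Module Submodule

noncomputable section

variable {V : Type*} [NormedAddCommGroup V] [InnerProductSpace ℝ V]

/-- The curvature-type operator built from `ε` and the difference tensor `K`:
`R(X,Y)Z = ε(⟨Y,Z⟩X − ⟨X,Z⟩Y) − K(X,K(Y,Z)) + K(Y,K(X,Z))`. -/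
def Rc (ε : ℝ) (K : V →ₗ[ℝ] V →ₗ[ℝ] V) (X Y Z : V) : V :=
  ε • (⟪Y, Z⟫ • X - ⟪X, Z⟫ • Y) - K X (K Y Z) + K Y (K X Z)

lemma Rc_smul_right (ε : ℝ) (K : V →ₗ[ℝ] V →ₗ[ℝ] V) (X Y : V) (c : ℝ) (Z : V) :
    Rc ε K X Y (c • Z) = c • Rc ε K X Y Z := by
  simp only [Rc, inner_smul_right, map_smul, smul_sub, smul_add]
  module

/-- Theorem 4.2: Case `C_n` cannot occur: if `K(e₁,·)` has eigenvalue `λ₁/2` on the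
whole orthogonal complement of the maximizer `e₁`, then `λ₁² = 4ε`, i.e. `ε = 1` and
`λ₁ = 2`. -/
theorem stmt_1 {V : Type*} [NormedAddCommGroup V] [InnerProductSpace ℝ V]
    (n : ℕ) (hn : finrank ℝ V = n) (hn2 : 2 ≤ n)
    (ε : ℝ) (hε : ε = 1 ∨ ε = -1)
    (K : V →ₗ[ℝ] V →ₗ[ℝ] V)
    (hKsymm : ∀ X Y : V, K X Y = K Y X)
    (hKcub : ∀ X Y Z : V, ⟪K X Y, Z⟫ = ⟪K X Z, Y⟫)
    (hpar : ∀ X Y Z U : V,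
      Rc ε K X Y (K Z U) = K (Rc ε K X Y Z) U + K Z (Rc ε K X Y U))
    (e1 : V) (he1 : ‖e1‖ = 1)
    (lam1 : ℝ) (hlam1 : lam1 = ⟪K e1 e1, e1⟫) (hlam1pos : 0 < lam1)
    (hmax : ∀ u : V, ‖u‖ = 1 → ⟪K u u, u⟫ ≤ lam1)
    (heig : ∀ v : V, ⟪e1, v⟫ = 0 → K e1 v = (lam1 / 2) • v) :
    lam1 ^ 2 = 4 * ε ∧ ε = 1 ∧ lam1 = 2 := by
  have hfd : FiniteDimensional ℝ V := FiniteDimensional.of_finrank_pos (by rw [hn]; omega)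
  have he1ne : e1 ≠ 0 := by
    intro h; rw [h, norm_zero] at he1; norm_num at he1
  obtain ⟨v, hv0, hv1⟩ : ∃ v : V, ⟪e1, v⟫ = 0 ∧ ‖v‖ = 1 := by
    have h1 : finrank ℝ (ℝ ∙ e1) = 1 := finrank_span_singleton he1ne
    have h2 : finrank ℝ (ℝ ∙ e1) + finrank ℝ (ℝ ∙ e1)ᗮ = finrank ℝ V :=
      Submodule.finrank_add_finrank_orthogonal _
    have h3 : 0 < finrank ℝ (ℝ ∙ e1)ᗮ := by rw [hn] at h2; omega
    have h4 : (ℝ ∙ e1)ᗮ ≠ ⊥ := by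
      intro h; rw [h, finrank_bot] at h3; omega
    obtain ⟨x, hx, hxne⟩ := Submodule.exists_mem_ne_zero_of_ne_bot h4
    refine ⟨‖x‖⁻¹ • x, ?_, norm_smul_inv_norm hxne⟩
    rw [inner_smul_right]
    have hex : ⟪e1, x⟫ = 0 :=
      (Submodule.mem_orthogonal _ _).mp hx e1 (Submodule.mem_span_singleton_self e1)
    rw [hex, mul_zero]
  have hvne : v ≠ 0 := by
    intro h; rw [h, norm_zero] at hv1; norm_num at hv1
  have hee : ⟪e1, e1⟫ = 1 := by
    rw [real_inner_self_eq_norm_sq, he1]; norm_num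
  have hvv : ⟪v, v⟫ = 1 := by
    rw [real_inner_self_eq_norm_sq, hv1]; norm_num
  have hve : ⟪v, e1⟫ = 0 := by rw [real_inner_comm]; exact hv0
  have hKe1v : K e1 v = (lam1 / 2) • v := heig v hv0
  -- K e1 e1 = lam1 • e1
  have hKe1e1 : K e1 e1 = lam1 • e1 := by
    set p := K e1 e1 - lam1 • e1 with hp
    have hpe : ⟪e1, p⟫ = 0 := by
      rw [hp, inner_sub_right, inner_smul_right, hee, real_inner_comm, ← hlam1]
      ring
    have hKp : K e1 p = (lam1 / 2) • p := heig p hpe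
    have hpe' : ⟪p, e1⟫ = 0 := by rw [real_inner_comm]; exact hpe
    have hpp : ⟪p, p⟫ = 0 := by
      have h1 : ⟪p, p⟫ = ⟪K e1 e1, p⟫ - lam1 * ⟪e1, p⟫ := by
        rw [hp, inner_sub_left, real_inner_smul_left]
      rw [hKcub e1 e1 p, hKp, real_inner_smul_left, hpe, hpe'] at h1
      rw [h1]; ring
    have hp0 : p = 0 := by rwa [inner_self_eq_zero] at hpp
    rw [hp] at hp0
    exact sub_eq_zero.mp hp0
  -- decomposition of K v v
  have ha : ⟪K v v, e1⟫ = lam1 / 2 := by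
    rw [hKcub v v e1, hKsymm v e1, hKe1v, real_inner_smul_left, hvv, mul_one]
  set w := K v v - (lam1 / 2) • e1 with hw
  have hwe : ⟪e1, w⟫ = 0 := by
    rw [hw, inner_sub_right, inner_smul_right, hee, real_inner_comm, ha]; ring
  have hKe1w : K e1 w = (lam1 / 2) • w := heig w hwe
  have hKvv : K v v = (lam1 / 2) • e1 + w := by rw [hw]; abel
  set μ := lam1 ^ 2 / 4 - ε with hμdef
  have hRe : Rc ε K e1 v e1 = μ • v := by
    simp only [Rc, hve, hee, hKsymm v e1, hKe1v, hKe1e1, map_smul, hμdef]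
    module
  have hRv : Rc ε K e1 v v = (-μ) • e1 := by
    simp only [Rc, hvv, hv0, hKvv, map_add, map_smul, hKe1e1, hKe1w, hKe1v, hμdef]
    module
  have hμ0 : μ = 0 := by
    have hμw : μ • w = 0 := by
      have hp := hpar e1 v e1 v
      rw [hKe1v, Rc_smul_right, hRv, hRe] at hp
      simp only [map_smul, LinearMap.smul_apply, hKe1e1, hKvv] at hp
      linear_combination (norm := module) -hp
    rcases smul_eq_zero.mp hμw with h | hw0
    · exact h
    · have hKvv2 : K v v = (lam1 / 2) • e1 := by rw [hKvv, hw0, add_zero]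
      have hp := hpar e1 v v v
      rw [hKvv2, Rc_smul_right, hRe, hRv] at hp
      simp only [map_smul, LinearMap.smul_apply, hKsymm v e1, hKe1v, hKvv2] at hp
      have hc : ((lam1 / 2) * μ + lam1 * μ) • v = 0 := by
        linear_combination (norm := module) hp
      have hc0 : (lam1 / 2) * μ + lam1 * μ = 0 := by
        rcases smul_eq_zero.mp hc with h | h
        · exact h
        · exact absurd h hvne
      have hlm : lam1 * μ = 0 := by linear_combination (2 / 3) * hc0
      rcases mul_eq_zero.mp hlm with h | h
      · exact absurd h (ne_of_gt hlam1pos)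
      · exact h
  have h1 : lam1 ^ 2 = 4 * ε := by rw [hμdef] at hμ0; linarith
  have h2 : ε = 1 := by
    rcases hε with h | h
    · exact h
    · nlinarith [sq_nonneg lam1]
  have h3 : lam1 = 2 := by nlinarith
  exact ⟨h1, h2, h3⟩

end
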